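/- arXiv:0809.1332 — 6 statements merged into one kernel-verified Lean document; each statement's English description precedes it below -/
import Mathlib

section
/- Let L be a bounded linear order with bottom a and top b. Every lattice polynomial function p : L^n → L admits a disjunctive normal form: p(t) = ⋁_{A ⊆ [n], w(A)=b} ⋀_{i∈A} t_i, where w(A) = p(e_A^{a,b}) and e_A^{a,b} is the vector with i-th coordinate b if i ∈ A and a otherwise. -/
/-- Lattice polynomial functions: the smallest class of functions `L^n → L` containing the
coordinate projections and closed under pointwise binary min and max. -/
inductive IsLatticePolynomial {L : Type*} [LinearOrder L] {n : ℕ} :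
    ((Fin n → L) → L) → Prop
  | proj (k : Fin n) : IsLatticePolynomial (fun t => t k)
  | inf {p q : (Fin n → L) → L} : IsLatticePolynomial p → IsLatticePolynomial q →
      IsLatticePolynomial (fun t => p t ⊓ q t)
  | sup {p q : (Fin n → L) → L} : IsLatticePolynomial p → IsLatticePolynomial q →
      IsLatticePolynomial (fun t => p t ⊔ q t)

lemma IsLatticePolynomial.monotone {L : Type*} [LinearOrder L] {n : ℕ}
    {p : (Fin n → L) → L} (hp : IsLatticePolynomial p) : Monotone p := by
  induction hp with
  | proj k => exact fun s t h => h k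
  | inf hp hq ihp ihq => exact fun s t h => inf_le_inf (ihp h) (ihq h)
  | sup hp hq ihp ihq => exact fun s t h => sup_le_sup (ihp h) (ihq h)

lemma IsLatticePolynomial.map_monotone {L : Type*} [LinearOrder L] {n : ℕ}
    {p : (Fin n → L) → L} (hp : IsLatticePolynomial p) (f : L → L) (hf : Monotone f)
    (t : Fin n → L) : p (fun i => f (t i)) = f (p t) := by
  induction hp with
  | proj k => rfl
  | inf hp hq ihp ihq =>
      simp only [ihp, ihq, hf.map_min]
  | sup hp hq ihp ihq =>
      simp only [ihp, ihq, hf.map_max]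

/-- Disjunctive normal form: `p(t) = ⋁_{A : w(A)=⊤} ⋀_{i∈A} t_i` with `w(A) = p(e_A^{⊥,⊤})`. -/
theorem latticePolynomial_disjunctive_normal_form {L : Type*} [LinearOrder L] [BoundedOrder L]
    {n : ℕ} (p : (Fin n → L) → L) (hp : IsLatticePolynomial p) (t : Fin n → L) :
    p t = (Finset.univ.filter fun A : Finset (Fin n) =>
        p (fun i => if i ∈ A then (⊤ : L) else ⊥) = ⊤).sup (fun A => A.inf t) := by
  apply le_antisymm
  · set A : Finset (Fin n) := Finset.univ.filter fun i => p t ≤ t i with hA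
    have hfmono : Monotone (fun x : L => if p t ≤ x then (⊤ : L) else ⊥) := by
      intro x y hxy
      dsimp only
      split_ifs with h1 h2 h2
      · exact le_rfl
      · exact absurd (h1.trans hxy) h2
      · exact bot_le
      · exact le_rfl
    have hwA : p (fun i => if i ∈ A then (⊤ : L) else ⊥) = ⊤ := by
      have heq : (fun i => if i ∈ A then (⊤ : L) else ⊥)
          = fun i => if p t ≤ t i then (⊤ : L) else ⊥ := by
        funext i; simp [hA]
      rw [heq, hp.map_monotone _ hfmono t, if_pos le_rfl]
    refine le_trans ?_ (Finset.le_sup (f := fun A : Finset (Fin n) => A.inf t)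
      (b := A) (by simp [hwA]))
    exact Finset.le_inf fun i hi => (Finset.mem_filter.mp hi).2
  · refine Finset.sup_le fun A hA => ?_
    have hwA : p (fun i => if i ∈ A then (⊤ : L) else ⊥) = ⊤ :=
      (Finset.mem_filter.mp hA).2
    set d := A.inf t with hd
    have hgmono : Monotone (fun x : L => if d ≤ x then (⊤ : L) else ⊥) := by
      intro x y hxy
      dsimp only
      split_ifs with h1 h2 h2
      · exact le_rfl
      · exact absurd (h1.trans hxy) h2
      · exact bot_le
      · exact le_rfl
    have hle : (fun i => if i ∈ A then (⊤ : L) else ⊥)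
        ≤ fun i => if d ≤ t i then (⊤ : L) else ⊥ := by
      intro i
      dsimp only
      by_cases hi : i ∈ A
      · rw [if_pos hi, if_pos (Finset.inf_le hi)]
      · rw [if_neg hi]; exact bot_le
    have : (⊤ : L) ≤ if d ≤ p t then (⊤ : L) else ⊥ := by
      calc (⊤ : L) = p (fun i => if i ∈ A then (⊤ : L) else ⊥) := hwA.symm
        _ ≤ p (fun i => if d ≤ t i then (⊤ : L) else ⊥) := hp.monotone hle
        _ = if d ≤ p t then (⊤ : L) else ⊥ := hp.map_monotone _ hgmono t
    by_cases h : d ≤ p t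
    · exact h
    · rw [if_neg h] at this
      calc d ≤ ⊤ := le_top
        _ ≤ ⊥ := this
        _ ≤ p t := bot_le
end

section
/- Every lattice polynomial function p : L^n → L over a linear order L satisfies the median-based pivotal decomposition p(t) = median(p(t with t_i := a), t_i, p(t with t_i := b)) for each coordinate i, where median(x,y,z) = (x∧y)∨(y∧z)∨(z∧x) and a ≤ t_j ≤ b for all j. -/
lemma key_inf {L : Type*} [LinearOrder L] (a b a' b' c : L) (h : a ≤ b) (h' : a' ≤ b') :
    (a ⊔ c ⊓ b) ⊓ (a' ⊔ c ⊓ b') = a ⊓ a' ⊔ c ⊓ (b ⊓ b') := by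
  apply le_antisymm
  · rw [inf_sup_right, inf_sup_left, inf_sup_left]
    refine sup_le (sup_le (le_sup_left.trans le_rfl) ?_) (sup_le ?_ ?_)
    · exact le_sup_of_le_right (le_inf (inf_le_right.trans inf_le_left)
        (le_inf (inf_le_left.trans h) (inf_le_right.trans inf_le_right)))
    · exact le_sup_of_le_right (le_inf (inf_le_left.trans inf_le_left)
        (le_inf (inf_le_left.trans inf_le_right) (inf_le_right.trans h')))
    · exact le_sup_of_le_right (le_inf (inf_le_left.trans inf_le_left)
        (le_inf (inf_le_left.trans inf_le_right) (inf_le_right.trans inf_le_right)))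
  · refine sup_le (inf_le_inf le_sup_left le_sup_left) (le_inf ?_ ?_)
    · exact le_sup_of_le_right (le_inf inf_le_left (inf_le_right.trans inf_le_left))
    · exact le_sup_of_le_right (le_inf inf_le_left (inf_le_right.trans inf_le_right))

lemma key_sup {L : Type*} [LinearOrder L] (a b a' b' c : L) :
    (a ⊔ c ⊓ b) ⊔ (a' ⊔ c ⊓ b') = a ⊔ a' ⊔ c ⊓ (b ⊔ b') := by
  rw [inf_sup_left]
  ac_rfl

lemma IsLatticePolynomial.decomp {L : Type*} [LinearOrder L] [BoundedOrder L] {n : ℕ}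
    {p : (Fin n → L) → L} (hp : IsLatticePolynomial p) (i : Fin n) (t : Fin n → L) :
    p t = p (Function.update t i ⊥) ⊔ (t i ⊓ p (Function.update t i ⊤)) := by
  induction hp with
  | proj k =>
    by_cases h : k = i
    · subst h; simp
    · simp [Function.update_of_ne h]
  | @inf p q hp hq ihp ihq =>
    have hle : Function.update t i (⊥ : L) ≤ Function.update t i ⊤ := by
      intro j; simp only [Function.update_apply]; split <;> simp
    simp only
    rw [ihp, ihq, key_inf _ _ _ _ _ (hp.monotone hle) (hq.monotone hle)]
  | @sup p q hp hq ihp ihq =>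
    simp only
    rw [ihp, ihq, key_sup]

/-- Median-based pivotal decomposition:
`p(t) = median (p(t with t_i := ⊥)) (t_i) (p(t with t_i := ⊤))`,
where `median x y z = (x⊓y) ⊔ (y⊓z) ⊔ (z⊓x)`. -/
theorem latticePolynomial_median_decomposition {L : Type*} [LinearOrder L] [BoundedOrder L]
    {n : ℕ} (p : (Fin n → L) → L) (hp : IsLatticePolynomial p) (i : Fin n) (t : Fin n → L) :
    p t = (p (Function.update t i ⊥) ⊓ t i) ⊔ (t i ⊓ p (Function.update t i ⊤)) ⊔
        (p (Function.update t i ⊤) ⊓ p (Function.update t i ⊥)) := by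
  have hle : Function.update t i (⊥ : L) ≤ Function.update t i ⊤ := by
    intro j; simp only [Function.update_apply]; split <;> simp
  have hab : p (Function.update t i ⊥) ≤ p (Function.update t i ⊤) := hp.monotone hle
  rw [hp.decomp i t, inf_eq_right.mpr hab]
  apply le_antisymm
  · exact sup_le le_sup_right (le_sup_of_le_left le_sup_right)
  · exact sup_le (sup_le (le_sup_of_le_left inf_le_left) le_sup_right) le_sup_left
end

section
/- Let L be a linear order. A lattice polynomial function p : L^n → L satisfies p(t ∧ t') = p(t) ∧ p(t') for all t, t' ∈ L^n (where ∧ is taken componentwise) if and only if p(t) = ⋀_{i∈B} t_i for some nonempty subset B ⊆ [n]. -/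
private lemma inf'_min_aux {L : Type*} [LinearOrder L] {n : ℕ}
    (B : Finset (Fin n)) (hB : B.Nonempty) (t t' : Fin n → L) :
    B.inf' hB (fun i => t i ⊓ t' i) = B.inf' hB t ⊓ B.inf' hB t' := by
  refine le_antisymm (le_inf ?_ ?_) ?_
  · exact Finset.le_inf' hB _ fun b hb => Finset.inf'_le_of_le _ hb inf_le_left
  · exact Finset.le_inf' hB _ fun b hb => Finset.inf'_le_of_le _ hb inf_le_right
  · exact Finset.le_inf' hB _ fun b hb =>
      inf_le_inf (Finset.inf'_le _ hb) (Finset.inf'_le _ hb)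

/-- Disjunctive normal form for lattice polynomials over a linear order. -/
private lemma exists_dnf {L : Type*} [LinearOrder L] {n : ℕ}
    (p : (Fin n → L) → L) (hp : IsLatticePolynomial p) :
    ∃ (S : Finset {B : Finset (Fin n) // B.Nonempty}) (hS : S.Nonempty),
      ∀ t, p t = S.sup' hS (fun B => B.1.inf' B.2 t) := by
  induction hp with
  | proj k =>
      refine ⟨{⟨{k}, Finset.singleton_nonempty k⟩}, Finset.singleton_nonempty _, fun t => ?_⟩
      simp
  | @inf p q hp hq ihp ihq =>
      obtain ⟨S, hS, hSp⟩ := ihp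
      obtain ⟨T, hT, hTq⟩ := ihq
      refine ⟨(S ×ˢ T).image (fun BC => ⟨BC.1.1 ∪ BC.2.1, BC.1.2.mono Finset.subset_union_left⟩),
        ((hS.product hT).image _), fun t => ?_⟩
      rw [Finset.sup'_image]
      show p t ⊓ q t = _
      rw [hSp t, hTq t, Finset.sup'_inf_sup']
      refine Finset.sup'_congr _ rfl fun BC hBC => ?_
      exact (Finset.inf'_union BC.1.2 BC.2.2 t).symm
  | @sup p q hp hq ihp ihq =>
      obtain ⟨S, hS, hSp⟩ := ihp
      obtain ⟨T, hT, hTq⟩ := ihq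
      refine ⟨S ∪ T, hS.mono Finset.subset_union_left, fun t => ?_⟩
      show p t ⊔ q t = _
      rw [Finset.sup'_union hS hT, hSp t, hTq t]

private lemma minhom_finset {L : Type*} [LinearOrder L] {n : ℕ} {p : (Fin n → L) → L}
    (hmin : ∀ t t' : Fin n → L, p (fun i => t i ⊓ t' i) = p t ⊓ p t')
    {ι : Type*} (S : Finset ι) (hS : S.Nonempty) (v : ι → Fin n → L) :
    p (fun i => S.inf' hS (fun C => v C i)) = S.inf' hS (fun C => p (v C)) := by
  induction hS using Finset.Nonempty.cons_induction with
  | singleton c => rfl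
  | cons c s hc hs ih =>
      simp only [Finset.inf'_cons (H := hs)]
      rw [hmin (v c) (fun i => s.inf' hs fun C => v C i), ih]

/-- A lattice polynomial function distributes over componentwise minimum iff it is a minimum
over a nonempty subset of its variables. -/
theorem latticePolynomial_min_homomorphism_iff {L : Type*} [LinearOrder L] {n : ℕ}
    (p : (Fin n → L) → L) (hp : IsLatticePolynomial p) :
    (∀ t t' : Fin n → L, p (fun i => t i ⊓ t' i) = p t ⊓ p t') ↔
      ∃ (B : Finset (Fin n)) (hB : B.Nonempty), ∀ t : Fin n → L, p t = B.inf' hB t := by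
  constructor
  · intro hmin
    obtain ⟨S, hS, hdnf⟩ := exists_dnf p hp
    by_cases htriv : ∀ a b : L, a = b
    · obtain ⟨B, _⟩ := hS
      exact ⟨B.1, B.2, fun t => htriv _ _⟩
    · push_neg at htriv
      obtain ⟨a₀, b₀, hab₀⟩ := htriv
      obtain ⟨a, b, hab⟩ : ∃ a b : L, a < b := by
        rcases lt_or_gt_of_ne hab₀ with h | h
        · exact ⟨a₀, b₀, h⟩
        · exact ⟨b₀, a₀, h⟩
      set v : Finset (Fin n) → Fin n → L := fun D i => if i ∈ D then a else b with hv
      -- Step 1: for each C in S, p (v C.1ᶜ) = b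
      have step1 : ∀ C ∈ S, p (v (C.1ᶜ)) = b := by
        intro C hC
        rw [hdnf]
        refine le_antisymm (Finset.sup'_le _ _ fun C' hC' => ?_) ?_
        · obtain ⟨i, hi⟩ := C'.2
          refine Finset.inf'_le_of_le _ hi ?_
          simp only [hv]
          split <;> simp [hab.le]
        · refine Finset.le_sup'_of_le _ hC ?_
          refine Finset.le_inf' _ _ fun i hi => ?_
          simp [hv, hi]
      -- Step 2: p of the componentwise inf of the v (C.1ᶜ) is b
      have step2 : p (fun i => S.inf' hS (fun C => v (C.1ᶜ) i)) = b := by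
        rw [minhom_finset hmin S hS]
        rw [Finset.inf'_congr hS rfl (fun C hC => step1 C hC)]
        exact Finset.inf'_const hS b
      -- extract the witness where the sup' is attained
      set w : Fin n → L := fun i => S.inf' hS (fun C => v (C.1ᶜ) i) with hw
      obtain ⟨Cs, hCs, hCsEq⟩ := Finset.exists_mem_eq_sup' hS (fun B => B.1.inf' B.2 w)
      have hCsb : Cs.1.inf' Cs.2 w = b := by
        rw [← hCsEq, ← hdnf, step2]
      -- Cs.1 ⊆ C.1 for all C in S
      have hsub : ∀ C ∈ S, Cs.1 ⊆ C.1 := by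
        intro C hC i hiCs
        by_contra hiC
        have h1 : w i ≤ a := by
          refine Finset.inf'_le_of_le _ hC ?_
          simp [hv, hiC]
        have h2 : Cs.1.inf' Cs.2 w ≤ a := Finset.inf'_le_of_le _ hiCs h1
        rw [hCsb] at h2
        exact absurd (h2.trans_lt hab) (lt_irrefl b)
      refine ⟨Cs.1, Cs.2, fun t => ?_⟩
      rw [hdnf t]
      refine le_antisymm (Finset.sup'_le _ _ fun C hC => ?_) (Finset.le_sup' (fun B => B.1.inf' B.2 t) hCs)
      exact Finset.inf'_mono _ (hsub C hC) Cs.2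
  · rintro ⟨B, hB, hBt⟩ t t'
    simp only [hBt]
    exact inf'_min_aux B hB t t'
end

section
/- Let L be a linear order. A lattice polynomial function p : L^n → L satisfies p(t ∨ t') = p(t) ∨ p(t') for all t, t' ∈ L^n (componentwise ∨) if and only if p(t) = ⋁_{i∈B} t_i for some nonempty subset B ⊆ [n]. -/
section Aux
variable {L : Type*} [LinearOrder L] {n : ℕ} {p : (Fin n → L) → L}

private lemma ILP.mono (hp : IsLatticePolynomial p) : Monotone p := by
  induction hp with
  | proj k => exact fun t t' h => h k
  | inf hp hq ihp ihq => exact fun t t' h => inf_le_inf (ihp h) (ihq h)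
  | sup hp hq ihp ihq => exact fun t t' h => sup_le_sup (ihp h) (ihq h)

private lemma ILP.const (hp : IsLatticePolynomial p) (c : L) : p (fun _ => c) = c := by
  induction hp with
  | proj k => rfl
  | inf hp hq ihp ihq => simp [ihp, ihq]
  | sup hp hq ihp ihq => simp [ihp, ihq]

private lemma ILP.map_mono (hp : IsLatticePolynomial p) (g : L → L) (hg : Monotone g)
    (t : Fin n → L) : p (fun j => g (t j)) = g (p t) := by
  induction hp with
  | proj k => rfl
  | inf hp hq ihp ihq => simp only [ihp, ihq, hg.map_min]
  | sup hp hq ihp ihq => simp only [ihp, ihq, hg.map_max]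

private lemma ILP.idx (hp : IsLatticePolynomial p) : Nonempty (Fin n) := by
  induction hp with
  | proj k => exact ⟨k⟩
  | inf hp hq ihp ihq => exact ihp
  | sup hp hq ihp ihq => exact ihp

private lemma ILP.sup'_hom
    (hsup : ∀ t t' : Fin n → L, p (fun i => t i ⊔ t' i) = p t ⊔ p t')
    {ι : Type*} (S : Finset ι) (hS : S.Nonempty) (f : ι → Fin n → L) :
    p (fun j => S.sup' hS (fun i => f i j)) = S.sup' hS (fun i => p (f i)) := by
  induction hS using Finset.Nonempty.cons_induction with
  | singleton i => simp only [Finset.sup'_singleton]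
  | cons i S hiS hS ih =>
      simp only [Finset.sup'_cons hS]
      rw [← ih, ← hsup]

end Aux

/-- A lattice polynomial function distributes over componentwise maximum iff it is a maximum
over a nonempty subset of its variables. -/
theorem latticePolynomial_max_homomorphism_iff {L : Type*} [LinearOrder L] {n : ℕ}
    (p : (Fin n → L) → L) (hp : IsLatticePolynomial p) :
    (∀ t t' : Fin n → L, p (fun i => t i ⊔ t' i) = p t ⊔ p t') ↔
      ∃ (B : Finset (Fin n)) (hB : B.Nonempty), ∀ t : Fin n → L, p t = B.sup' hB t := by
  classical
  constructor
  · intro hsup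
    obtain ⟨k⟩ := ILP.idx hp
    haveI : Nonempty (Fin n) := ⟨k⟩
    by_cases hsub : Subsingleton L
    · exact ⟨{k}, Finset.singleton_nonempty k,
        fun t => Subsingleton.elim _ _⟩
    · rw [not_subsingleton_iff_nontrivial] at hsub
      obtain ⟨x, y, hxy⟩ := exists_pair_ne L
      obtain ⟨a, b, hab⟩ : ∃ a b : L, a < b := by
        rcases hxy.lt_or_gt with h | h
        exacts [⟨x, y, h⟩, ⟨y, x, h⟩]
      set χ : Fin n → Fin n → L := fun i j => if j = i then b else a with hχ
      have hχab : ∀ i j, a ≤ χ i j := fun i j => by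
        simp only [hχ]; split_ifs; exacts [hab.le, le_refl a]
      have hχb : ∀ i j, χ i j ≤ b := fun i j => by
        simp only [hχ]; split_ifs; exacts [le_refl b, hab.le]
      set B : Finset (Fin n) := Finset.univ.filter (fun i => p (χ i) = b) with hBdef
      -- p (χ i) ≤ b always
      have hpχ_le : ∀ i, p (χ i) ≤ b := fun i => by
        calc p (χ i) ≤ p (fun _ => b) := ILP.mono hp (fun j => hχb i j)
        _ = b := ILP.const hp b
      -- B nonempty
      have hB : B.Nonempty := by
        by_contra hne
        rw [Finset.not_nonempty_iff_eq_empty] at hne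
        have hall : ∀ i, p (χ i) < b := by
          intro i
          refine lt_of_le_of_ne (hpχ_le i) ?_
          intro h
          have : i ∈ B := by simp [hBdef, h]
          simp [hne] at this
        have h1 : p (fun j => Finset.univ.sup' Finset.univ_nonempty (fun i => χ i j)) =
            Finset.univ.sup' Finset.univ_nonempty (fun i => p (χ i)) :=
          ILP.sup'_hom hsup _ _ _
        have h2 : (fun j => Finset.univ.sup' (Finset.univ_nonempty (α := Fin n))
            (fun i => χ i j)) = fun _ => b := by
          funext j
          refine le_antisymm (Finset.sup'_le _ _ fun i _ => hχb i j) ?_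
          refine Finset.le_sup'_of_le _ (Finset.mem_univ j) ?_
          simp [hχ]
        rw [h2, ILP.const hp b] at h1
        have h3 : Finset.univ.sup' (Finset.univ_nonempty (α := Fin n))
            (fun i => p (χ i)) < b := by
          rw [Finset.sup'_lt_iff]
          exact fun i _ => hall i
        rw [← h1] at h3
        exact lt_irrefl b h3
      refine ⟨B, hB, fun t => ?_⟩
      refine le_antisymm ?_ (Finset.sup'_le _ _ fun i hi => ?_)
      · -- p t ≤ sup
        by_contra hlt
        push_neg at hlt
        set s := B.sup' hB t with hs
        set g : L → L := fun x => if x ≤ s then a else b with hg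
        have hgmono : Monotone g := by
          intro x y hxy
          by_cases hy : y ≤ s
          · have hx : x ≤ s := hxy.trans hy
            simp [hg, hx, hy]
          · simp only [hg, if_neg hy]
            split_ifs
            exacts [hab.le, le_refl b]
        have h1 : p (fun j => g (t j)) = g (p t) := ILP.map_mono hp g hgmono t
        have h2 : g (p t) = b := by simp only [hg, if_neg (not_le.mpr hlt)]
        -- bound g ∘ t by v
        set v : Fin n → L := fun j => if j ∈ B then a else b with hv
        have hgv : ∀ j, g (t j) ≤ v j := by
          intro j
          by_cases hjB : j ∈ B
          · have hts : t j ≤ s := Finset.le_sup' t hjB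
            simp [hg, hv, hjB, hts]
          · simp only [hg, hv, if_neg hjB]
            split_ifs
            exacts [hab.le, le_refl b]
        -- decompose v
        set w : Fin n → Fin n → L := fun i j => if j = i then v i else a with hw
        have hvd : v = fun j => Finset.univ.sup' Finset.univ_nonempty (fun i => w i j) := by
          funext j
          refine le_antisymm ?_ (Finset.sup'_le _ _ fun i _ => ?_)
          · refine Finset.le_sup'_of_le _ (Finset.mem_univ j) ?_
            simp [hw]
          · simp only [hw]
            split_ifs with h3
            · subst h3; exact le_refl _
            · simp only [hv]; split_ifs; exacts [le_refl a, hab.le]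
        have hpw : ∀ i, p (w i) < b := by
          intro i
          by_cases hiB : i ∈ B
          · have : w i = fun _ => a := by
              funext j
              simp only [hw, hv, if_pos hiB]
              split_ifs <;> rfl
            rw [this, ILP.const hp a]
            exact hab
          · have : w i = χ i := by
              funext j
              simp only [hw, hv, hχ, if_neg hiB]
            rw [this]
            refine lt_of_le_of_ne (hpχ_le i) fun h => hiB ?_
            simp [hBdef, h]
        have h3 : p v = Finset.univ.sup' Finset.univ_nonempty (fun i => p (w i)) := by
          rw [hvd]; exact ILP.sup'_hom hsup _ _ _
        have h4 : p v < b := by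
          rw [h3, Finset.sup'_lt_iff]
          exact fun i _ => hpw i
        have h5 : b ≤ p v := by
          rw [← h2, ← h1]
          exact ILP.mono hp hgv
        exact absurd h5 (not_le.mpr h4)
      · -- t i ≤ p t for i ∈ B
        by_contra hlt
        push_neg at hlt
        set g : L → L := fun x => if t i ≤ x then b else a with hg
        have hgmono : Monotone g := by
          intro x y hxy
          by_cases hx : t i ≤ x
          · have hy : t i ≤ y := hx.trans hxy
            simp [hg, hx, hy]
          · simp only [hg, if_neg hx]
            split_ifs
            exacts [hab.le, le_refl a]
        have h1 : p (fun j => g (t j)) = g (p t) := ILP.map_mono hp g hgmono t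
        have h2 : g (p t) = a := by simp only [hg, if_neg (not_le.mpr hlt)]
        have hle : ∀ j, χ i j ≤ g (t j) := by
          intro j
          by_cases hji : j = i
          · subst hji; simp [hχ, hg]
          · simp only [hχ, if_neg hji, hg]
            split_ifs
            exacts [hab.le, le_refl a]
        have hiB : p (χ i) = b := by
          have := hi
          simp only [hBdef, Finset.mem_filter] at this
          exact this.2
        have : b ≤ a := by
          rw [← hiB, ← h2, ← h1]
          exact ILP.mono hp hle
        exact absurd this (not_le.mpr hab)
  · rintro ⟨B, hB, h⟩ t t'
    simp only [h]
    refine le_antisymm (Finset.sup'_le _ _ fun i hi => ?_) ?_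
    · exact sup_le_sup (Finset.le_sup' t hi) (Finset.le_sup' t' hi)
    · refine sup_le (Finset.sup'_le _ _ fun i hi => ?_) (Finset.sup'_le _ _ fun i hi => ?_)
      · exact Finset.le_sup'_of_le _ hi le_sup_left
      · exact Finset.le_sup'_of_le _ hi le_sup_right
end

section
/- A lattice polynomial function p : L^n → L over a linear order L is symmetric (invariant under all permutations of its arguments) if and only if p equals the k-th order statistic function f_k for some k ∈ [n], where f_k(t) returns the k-th smallest of t_1,…,t_n. -/
/-- The `k`-th order statistic function (`k`-th smallest value, `1 ≤ k ≤ n`), via the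
representation `f_k(t) = ⋁_{|A| = n-k+1} ⋀_{i∈A} t_i`. -/
def kthOrderStatistic {L : Type*} [LinearOrder L] (n k : ℕ) (hk : 1 ≤ k) (hkn : k ≤ n)
    (t : Fin n → L) : L :=
  ((Finset.univ : Finset (Finset (Fin n))).filter fun A => A.card = n - k + 1).attach.sup'
    (by
      have h : n - k + 1 ≤ n := by omega
      obtain ⟨A, -, hA⟩ := Finset.exists_subset_card_eq
        (s := (Finset.univ : Finset (Fin n))) (n := n - k + 1) (by simpa using h)
      exact Finset.attach_nonempty_iff.mpr
        ⟨A, Finset.mem_filter.mpr ⟨Finset.mem_univ _, hA⟩⟩)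
    (fun A =>
      A.1.inf'
        (by
          have hA := (Finset.mem_filter.mp A.2).2
          exact Finset.card_pos.mp (by omega))
        t)

/-- DNF representation of a lattice polynomial, stated via inequalities to avoid
dependent nonemptiness proofs. -/
theorem IsLatticePolynomial.exists_family {L : Type*} [LinearOrder L] {n : ℕ}
    {p : (Fin n → L) → L} (hp : IsLatticePolynomial p) :
    ∃ 𝒜 : Finset (Finset (Fin n)), 𝒜.Nonempty ∧ (∀ A ∈ 𝒜, A.Nonempty) ∧
      (∀ A ∈ 𝒜, ∀ (t : Fin n → L) (c : L), (∀ i ∈ A, c ≤ t i) → c ≤ p t) ∧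
      (∀ t : Fin n → L, ∃ A ∈ 𝒜, ∀ i ∈ A, p t ≤ t i) := by
  induction hp with
  | proj k =>
      refine ⟨{{k}}, ⟨{k}, Finset.mem_singleton_self _⟩, ?_, ?_, ?_⟩
      · intro A hA; rw [Finset.mem_singleton] at hA; subst hA; exact ⟨k, Finset.mem_singleton_self _⟩
      · intro A hA t c h
        rw [Finset.mem_singleton] at hA; subst hA
        exact h k (Finset.mem_singleton_self _)
      · intro t; exact ⟨{k}, Finset.mem_singleton_self _, by simp⟩
  | @inf p q hp hq ihp ihq =>
      obtain ⟨𝒜, h𝒜ne, h𝒜mem, h𝒜1, h𝒜2⟩ := ihp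
      obtain ⟨ℬ, hℬne, hℬmem, hℬ1, hℬ2⟩ := ihq
      refine ⟨(𝒜 ×ˢ ℬ).image fun ab => ab.1 ∪ ab.2, ?_, ?_, ?_, ?_⟩
      · obtain ⟨A, hA⟩ := h𝒜ne; obtain ⟨B, hB⟩ := hℬne
        exact ⟨A ∪ B, Finset.mem_image.mpr ⟨(A, B), Finset.mem_product.mpr ⟨hA, hB⟩, rfl⟩⟩
      · intro C hC
        obtain ⟨⟨A, B⟩, hAB, rfl⟩ := Finset.mem_image.mp hC
        obtain ⟨hA, hB⟩ := Finset.mem_product.mp hAB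
        obtain ⟨a, ha⟩ := h𝒜mem A hA
        exact ⟨a, Finset.mem_union_left _ ha⟩
      · intro C hC t c h
        obtain ⟨⟨A, B⟩, hAB, rfl⟩ := Finset.mem_image.mp hC
        obtain ⟨hA, hB⟩ := Finset.mem_product.mp hAB
        refine le_inf ?_ ?_
        · exact h𝒜1 A hA t c fun i hi => h i (Finset.mem_union_left _ hi)
        · exact hℬ1 B hB t c fun i hi => h i (Finset.mem_union_right _ hi)
      · intro t
        obtain ⟨A, hA, hAle⟩ := h𝒜2 t
        obtain ⟨B, hB, hBle⟩ := hℬ2 t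
        refine ⟨A ∪ B, Finset.mem_image.mpr ⟨(A, B), Finset.mem_product.mpr ⟨hA, hB⟩, rfl⟩, ?_⟩
        intro i hi
        rcases Finset.mem_union.mp hi with hi | hi
        · exact le_trans inf_le_left (hAle i hi)
        · exact le_trans inf_le_right (hBle i hi)
  | @sup p q hp hq ihp ihq =>
      obtain ⟨𝒜, h𝒜ne, h𝒜mem, h𝒜1, h𝒜2⟩ := ihp
      obtain ⟨ℬ, hℬne, hℬmem, hℬ1, hℬ2⟩ := ihq
      refine ⟨𝒜 ∪ ℬ, Finset.Nonempty.mono Finset.subset_union_left h𝒜ne, ?_, ?_, ?_⟩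
      · intro A hA
        rcases Finset.mem_union.mp hA with hA | hA
        · exact h𝒜mem A hA
        · exact hℬmem A hA
      · intro A hA t c h
        rcases Finset.mem_union.mp hA with hA | hA
        · exact le_trans (h𝒜1 A hA t c h) le_sup_left
        · exact le_trans (hℬ1 A hA t c h) le_sup_right
      · intro t
        rcases le_total (p t) (q t) with hpq | hpq
        · obtain ⟨B, hB, hBle⟩ := hℬ2 t
          refine ⟨B, Finset.mem_union_right _ hB, fun i hi => ?_⟩
          calc p t ⊔ q t = q t := sup_eq_right.mpr hpq
          _ ≤ t i := hBle i hi
        · obtain ⟨A, hA, hAle⟩ := h𝒜2 t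
          refine ⟨A, Finset.mem_union_left _ hA, fun i hi => ?_⟩
          calc p t ⊔ q t = p t := sup_eq_left.mpr hpq
          _ ≤ t i := hAle i hi

/-- Each `m`-subset's infimum is below the order statistic. -/
theorem inf'_le_kthOrderStatistic {L : Type*} [LinearOrder L] {n k : ℕ} (hk : 1 ≤ k)
    (hkn : k ≤ n) (t : Fin n → L) (B : Finset (Fin n)) (hB : B.card = n - k + 1)
    (hBne : B.Nonempty) :
    B.inf' hBne t ≤ kthOrderStatistic n k hk hkn t := by
  have hBmem : B ∈ (Finset.univ : Finset (Finset (Fin n))).filter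
      fun A => A.card = n - k + 1 := Finset.mem_filter.mpr ⟨Finset.mem_univ _, hB⟩
  exact Finset.le_sup' (f := fun A : {x // x ∈ _} => A.1.inf' (by
      have hA := (Finset.mem_filter.mp A.2).2
      exact Finset.card_pos.mp (by omega)) t)
    (Finset.mem_attach _ ⟨B, hBmem⟩)

/-- The order statistic is symmetric (one inequality). -/
theorem kthOrderStatistic_comp_perm_le {L : Type*} [LinearOrder L] {n k : ℕ} (hk : 1 ≤ k)
    (hkn : k ≤ n) (σ : Equiv.Perm (Fin n)) (t : Fin n → L) :
    kthOrderStatistic n k hk hkn (t ∘ σ) ≤ kthOrderStatistic n k hk hkn t := by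
  apply Finset.sup'_le
  rintro ⟨A, hA⟩ -
  have hAcard := (Finset.mem_filter.mp hA).2
  have hAne : A.Nonempty := Finset.card_pos.mp (by omega)
  have himg : (A.image σ).card = n - k + 1 := by
    rw [Finset.card_image_of_injective _ σ.injective]; exact hAcard
  have := inf'_le_kthOrderStatistic hk hkn t (A.image σ) himg (hAne.image σ)
  refine le_trans (le_of_eq ?_) this
  exact Finset.inf'_comp_eq_image hAne t

theorem kthOrderStatistic_comp_perm {L : Type*} [LinearOrder L] {n k : ℕ} (hk : 1 ≤ k)
    (hkn : k ≤ n) (σ : Equiv.Perm (Fin n)) (t : Fin n → L) :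
    kthOrderStatistic n k hk hkn (t ∘ σ) = kthOrderStatistic n k hk hkn t := by
  refine le_antisymm (kthOrderStatistic_comp_perm_le hk hkn σ t) ?_
  have := kthOrderStatistic_comp_perm_le hk hkn σ⁻¹ (t ∘ σ)
  have heq : (t ∘ ⇑σ) ∘ ⇑σ⁻¹ = t := by
    funext i
    simp [Function.comp, Equiv.Perm.inv_def]
  rwa [heq] at this

/-- A lattice polynomial function is symmetric iff it is a `k`-th order statistic function. -/
theorem latticePolynomial_symmetric_iff_orderStatistic {L : Type*} [LinearOrder L] {n : ℕ}
    (p : (Fin n → L) → L) (hp : IsLatticePolynomial p) :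
    (∀ (σ : Equiv.Perm (Fin n)) (t : Fin n → L), p (t ∘ σ) = p t) ↔
      ∃ (k : ℕ) (hk : 1 ≤ k) (hkn : k ≤ n),
        ∀ t : Fin n → L, p t = kthOrderStatistic n k hk hkn t := by
  constructor
  · intro hsym
    obtain ⟨𝒜, h𝒜ne, h𝒜mem, h𝒜1, h𝒜2⟩ := hp.exists_family
    -- minimal cardinality
    set m := (𝒜.image Finset.card).min' (h𝒜ne.image _) with hm
    obtain ⟨A₀, hA₀, hA₀card⟩ : ∃ A ∈ 𝒜, A.card = m := by
      have := (𝒜.image Finset.card).min'_mem (h𝒜ne.image _)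
      obtain ⟨A, hA, hAc⟩ := Finset.mem_image.mp this
      exact ⟨A, hA, hAc⟩
    have hmin : ∀ A ∈ 𝒜, m ≤ A.card := fun A hA =>
      Finset.min'_le _ _ (Finset.mem_image_of_mem _ hA)
    have hm1 : 1 ≤ m := by
      rw [← hA₀card]
      exact Finset.card_pos.mpr (h𝒜mem A₀ hA₀)
    have hmn : m ≤ n := by
      rw [← hA₀card]
      simpa using Finset.card_le_card (Finset.subset_univ A₀)
    refine ⟨n - m + 1, by omega, by omega, ?_⟩
    intro t
    have hmk : n - (n - m + 1) + 1 = m := by omega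
    apply le_antisymm
    · -- p t ≤ sup: use the witness set
      obtain ⟨A, hA, hAle⟩ := h𝒜2 t
      obtain ⟨A', hA'sub, hA'card⟩ := Finset.exists_subset_card_eq (hmin A hA)
      have hA'ne : A'.Nonempty := Finset.card_pos.mp (by omega)
      have h1 : p t ≤ A'.inf' hA'ne t :=
        Finset.le_inf' _ _ fun i hi => hAle i (hA'sub hi)
      exact le_trans h1 (inf'_le_kthOrderStatistic _ _ t A' (by omega) hA'ne)
    · -- sup ≤ p t : each B with |B| = m has inf'_B t ≤ p t via symmetry
      apply Finset.sup'_le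
      rintro ⟨B, hB⟩ -
      have hBcard : B.card = m := by
        have := (Finset.mem_filter.mp hB).2
        omega
      have hBne : B.Nonempty := Finset.card_pos.mp (by omega)
      have hcards : Fintype.card {x // x ∈ A₀} = Fintype.card {x // x ∈ B} := by
        simp [Fintype.card_coe, hA₀card, hBcard]
      let σ : Equiv.Perm (Fin n) :=
        Equiv.extendSubtype (Fintype.equivOfCardEq hcards)
      have key : B.inf' hBne t ≤ p (t ∘ σ) := by
        apply h𝒜1 A₀ hA₀
        intro i hi
        have hσi : σ i ∈ B := Equiv.extendSubtype_mem _ i hi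
        exact Finset.inf'_le _ hσi
      calc B.inf' hBne t ≤ p (t ∘ σ) := key
        _ = p t := hsym σ t
  · rintro ⟨k, hk, hkn, hrep⟩ σ t
    rw [hrep, hrep, kthOrderStatistic_comp_perm]
end

section
/- Let T_1,…,T_n be independent nonnegative random variables with P(T_i > t) = exp(−λ_i t), λ_i > 0, let v : 2^{[n]} → {0,1} be nondecreasing and nonconstant with Möbius transform m_v, and let T_S = p_w(T_1,…,T_n) be the corresponding lattice polynomial lifetime. Then E[T_S] = Σ_{∅ ≠ A ⊆ [n]} m_v(A)/λ_A, where λ_A = Σ_{i∈A} λ_i. -/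
open scoped ENNReal
open Finset MeasureTheory


lemma aux_filter_powerset {α : Type*} [DecidableEq α] (U B : Finset α) (hB : B ⊆ U) :
    U.powerset.filter (fun C => C ⊆ B) = B.powerset := by
  ext C
  simp only [mem_filter, mem_powerset]
  exact ⟨fun h => h.2, fun h => ⟨h.trans hB, h⟩⟩

lemma aux_inner {α : Type*} [DecidableEq α] (U C : Finset α) (hC : C ⊆ U) :
    ∑ B ∈ U.powerset.filter (fun B => C ⊆ B), (-1:ℝ)^(B.card - C.card)
      = if C = U then 1 else 0 := by
  have key : ∑ D ∈ (U \ C).powerset, (-1:ℝ)^D.card = if (U \ C) = ∅ then 1 else 0 := by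
    have h := @Finset.sum_powerset_neg_one_pow_card α _ (U \ C)
    have h2 := congrArg (fun z : ℤ => (z : ℝ)) h
    push_cast at h2
    simpa using h2
  calc ∑ B ∈ U.powerset.filter (fun B => C ⊆ B), (-1:ℝ)^(B.card - C.card)
      = ∑ D ∈ (U \ C).powerset, (-1:ℝ)^D.card := by
        refine Finset.sum_nbij' (fun B => B \ C) (fun D => D ∪ C) ?_ ?_ ?_ ?_ ?_
        · intro B hB; simp only [mem_filter, mem_powerset] at hB ⊢
          exact sdiff_subset_sdiff hB.1 Finset.Subset.rfl
        · intro D hD; simp only [mem_filter, mem_powerset] at hD ⊢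
          exact ⟨union_subset (hD.trans sdiff_subset) hC, subset_union_right⟩
        · intro B hB; simp only [mem_filter, mem_powerset] at hB
          exact sdiff_union_of_subset hB.2
        · intro D hD; simp only [mem_powerset] at hD
          have hdis : Disjoint C D := Finset.disjoint_sdiff.mono_right hD
          show (D ∪ C) \ C = D
          rw [union_sdiff_distrib, sdiff_self]; rw [show (⊥ : Finset α) = ∅ from rfl, union_empty]
          exact sdiff_eq_self_iff_disjoint.mpr hdis
        · intro B hB; simp only [mem_filter, mem_powerset] at hB
          rw [card_sdiff_of_subset hB.2]
    _ = if C = U then 1 else 0 := by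
        rw [key]
        have h3 : U \ C = ∅ ↔ C = U := by
          rw [Finset.sdiff_eq_empty_iff_subset]
          exact ⟨fun h => (Finset.Subset.antisymm hC h).symm ▸ rfl,
            fun h => h ▸ Finset.Subset.rfl⟩
        simp [h3]

lemma moebius_inv {α : Type*} [DecidableEq α] (f : Finset α → ℝ) (U : Finset α) :
    ∑ B ∈ U.powerset, ∑ C ∈ B.powerset, (-1:ℝ)^(B.card - C.card) * f C = f U := by
  have step1 : ∀ B ∈ U.powerset, ∑ C ∈ B.powerset, (-1:ℝ)^(B.card - C.card) * f C
      = ∑ C ∈ U.powerset, if C ⊆ B then (-1:ℝ)^(B.card - C.card) * f C else 0 := by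
    intro B hB
    rw [← aux_filter_powerset U B (mem_powerset.mp hB), sum_filter]
  rw [Finset.sum_congr rfl step1, Finset.sum_comm]
  have step2 : ∀ C ∈ U.powerset,
      (∑ B ∈ U.powerset, if C ⊆ B then (-1:ℝ)^(B.card - C.card) * f C else 0)
      = (if C = U then 1 else 0) * f C := by
    intro C hC
    rw [← Finset.sum_filter, ← Finset.sum_mul, aux_inner U C (mem_powerset.mp hC)]
  rw [Finset.sum_congr rfl step2]
  simp [ite_mul, Finset.sum_ite_eq' U.powerset U f, Finset.mem_powerset]

lemma aux_measurable_finset_sup {ι Ω : Type*} [MeasurableSpace Ω] (s : Finset ι)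
    (g : ι → Ω → ℝ≥0∞) (hg : ∀ i, Measurable (g i)) :
    Measurable (fun ω => s.sup (fun i => g i ω)) := by
  induction s using Finset.cons_induction with
  | empty => simpa using measurable_const
  | cons a s ha ih => simp only [Finset.sup_cons]; exact (hg a).sup ih

lemma aux_measurable_finset_inf {ι Ω : Type*} [MeasurableSpace Ω] (s : Finset ι)
    (g : ι → Ω → ℝ≥0∞) (hg : ∀ i, Measurable (g i)) :
    Measurable (fun ω => s.inf (fun i => g i ω)) := by
  induction s using Finset.cons_induction with
  | empty => simpa using measurable_const
  | cons a s ha ih => simp only [Finset.inf_cons]; exact (hg a).inf ih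


/-- For independent exponentially distributed lifetimes (`P(T_i > t) = exp(-λ_i t)`) and a
nondecreasing nonconstant structure `v`, the mean system lifetime of
`T_S = ⋁_{A : v(A)=1} ⋀_{i∈A} T_i` equals `Σ_{∅ ≠ A} m_v(A)/λ_A`, where
`m_v` is the Möbius transform of `v` and `λ_A = Σ_{i∈A} λ_i`. -/
theorem mttf_exponential {Ω : Type*} [MeasurableSpace Ω] (μ : MeasureTheory.Measure Ω)
    [MeasureTheory.IsProbabilityMeasure μ]
    (n : ℕ) (T : Fin n → Ω → ℝ≥0∞) (hmeas : ∀ i, Measurable (T i))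
    (lam : Fin n → ℝ) (hlam : ∀ i, 0 < lam i)
    (hdist : ∀ i, ∀ t : ℝ, 0 ≤ t →
      μ {ω | ENNReal.ofReal t < T i ω} = ENNReal.ofReal (Real.exp (-(lam i) * t)))
    (hind : ProbabilityTheory.iIndepFun T μ)
    (v : Finset (Fin n) → ℤ)
    (hv01 : ∀ A, v A = 0 ∨ v A = 1)
    (hmono : ∀ A B : Finset (Fin n), A ⊆ B → v A ≤ v B)
    (hnc : ∃ A B : Finset (Fin n), v A ≠ v B)
    (TS : Ω → ℝ≥0∞)
    (hTS : ∀ ω, TS ω =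
      (Finset.univ.filter fun A : Finset (Fin n) => v A = 1).sup
        (fun A => A.inf fun i => T i ω)) :
    (∫⁻ ω, TS ω ∂μ).toReal =
      ∑ A ∈ (Finset.univ : Finset (Finset (Fin n))).erase ∅,
        (∑ B ∈ A.powerset, (-1 : ℝ) ^ (A.card - B.card) * (v B : ℝ)) / (∑ i ∈ A, lam i) := by
  classical
  set m : Finset (Fin n) → ℝ :=
    fun B => ∑ C ∈ B.powerset, (-1:ℝ)^(B.card - C.card) * (v C : ℝ) with hm
  set lamS : Finset (Fin n) → ℝ := fun B => ∑ i ∈ B, lam i with hlamS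
  have hv0 : v ∅ = 0 := by
    rcases hv01 ∅ with h | h
    · exact h
    · exfalso
      obtain ⟨A, B, hAB⟩ := hnc
      have hA := hmono ∅ A (Finset.empty_subset A)
      have hB := hmono ∅ B (Finset.empty_subset B)
      rcases hv01 A with hA' | hA' <;> rcases hv01 B with hB' | hB' <;> omega
  have hm0 : m ∅ = 0 := by simp [hm, hv0]
  have hlampos : ∀ B : Finset (Fin n), B ≠ ∅ → 0 < lamS B := by
    intro B hB
    exact Finset.sum_pos (fun i _ => hlam i) (Finset.nonempty_of_ne_empty hB)
  have hTSmeas : Measurable TS := by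
    have h : TS = fun ω => (Finset.univ.filter fun A : Finset (Fin n) => v A = 1).sup
        (fun A => A.inf fun i => T i ω) := funext hTS
    rw [h]
    exact aux_measurable_finset_sup _ _ (fun A => aux_measurable_finset_inf _ _ hmeas)
  have hTtop : ∀ i, μ {ω | T i ω = ⊤} = 0 := by
    intro i
    have hle : ∀ k : ℕ, μ {ω | T i ω = ⊤} ≤ ENNReal.ofReal (Real.exp (-(lam i) * k)) := by
      intro k
      rw [← hdist i k (Nat.cast_nonneg k)]
      apply measure_mono
      intro ω hω
      simp only [Set.mem_setOf_eq] at hω ⊢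
      rw [hω]
      exact ENNReal.ofReal_lt_top
    have htend : Filter.Tendsto (fun k : ℕ => ENNReal.ofReal (Real.exp (-(lam i) * k)))
        Filter.atTop (nhds 0) := by
      rw [← ENNReal.ofReal_zero]
      apply ENNReal.tendsto_ofReal
      apply Real.tendsto_exp_atBot.comp
      have h1 : Filter.Tendsto (fun k : ℕ => (k : ℝ)) Filter.atTop Filter.atTop :=
        tendsto_natCast_atTop_atTop
      exact h1.const_mul_atTop_of_neg (neg_neg_iff_pos.mpr (hlam i)) |>.congr (fun k => rfl)
    exact le_antisymm (ge_of_tendsto' htend hle) zero_le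
  have hTStop : μ {ω | TS ω = ⊤} = 0 := by
    have hsub : {ω | TS ω = ⊤} ⊆ ⋃ i, {ω | T i ω = ⊤} := by
      intro ω hω
      simp only [Set.mem_setOf_eq, hTS ω] at hω
      rw [Finset.sup_eq_top_iff] at hω
      obtain ⟨A, hA, hAtop⟩ := hω
      rw [Finset.inf_eq_top_iff] at hAtop
      simp only [Finset.mem_filter] at hA
      have hAne : A.Nonempty := by
        rcases Finset.eq_empty_or_nonempty A with rfl | h
        · rw [hv0] at hA; exact absurd hA.2 (by norm_num)
        · exact h
      obtain ⟨i, hi⟩ := hAne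
      exact Set.mem_iUnion.mpr ⟨i, hAtop i hi⟩
    exact le_antisymm (le_trans (measure_mono hsub) (le_of_eq (measure_iUnion_null hTtop)))
      zero_le
  set Uset : ℝ → Ω → Finset (Fin n) :=
    fun t ω => Finset.univ.filter (fun i => ENNReal.ofReal t < T i ω) with hUset
  have hevent : ∀ t : ℝ, {ω | ENNReal.ofReal t < TS ω} = {ω | v (Uset t ω) = 1} := by
    intro t; ext ω
    simp only [Set.mem_setOf_eq, hTS ω]
    rw [Finset.lt_sup_iff]
    constructor
    · rintro ⟨A, hA, hlt⟩
      simp only [Finset.mem_filter, Finset.mem_univ, true_and] at hA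
      rw [Finset.lt_inf_iff ENNReal.ofReal_lt_top] at hlt
      have hsub : A ⊆ Uset t ω := fun i hi => Finset.mem_filter.mpr ⟨Finset.mem_univ i, hlt i hi⟩
      have h2 := hmono A (Uset t ω) hsub
      rcases hv01 (Uset t ω) with h | h
      · omega
      · exact h
    · intro h
      refine ⟨Uset t ω, ?_, ?_⟩
      · simp only [Finset.mem_filter, Finset.mem_univ, true_and]; exact h
      · rw [Finset.lt_inf_iff ENNReal.ofReal_lt_top]
        intro i hi
        exact (Finset.mem_filter.mp hi).2
  have hEmeas : ∀ (t:ℝ) (B : Finset (Fin n)),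
      MeasurableSet (⋂ i ∈ B, {ω | ENNReal.ofReal t < T i ω}) := by
    intro t B
    exact MeasurableSet.biInter B.countable_toSet
      (fun i _ => (hmeas i) measurableSet_Ioi)
  have hEB : ∀ (t:ℝ), 0 ≤ t → ∀ B : Finset (Fin n),
      μ (⋂ i ∈ B, {ω | ENNReal.ofReal t < T i ω})
        = ENNReal.ofReal (Real.exp (-(lamS B) * t)) := by
    intro t ht B
    have h1 := hind.meas_biInter (S := B)
      (s := fun i => {ω | ENNReal.ofReal t < T i ω})
      (fun i _ => ⟨Set.Ioi (ENNReal.ofReal t), measurableSet_Ioi, rfl⟩)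
    rw [h1, Finset.prod_congr rfl (fun i _ => hdist i t ht),
      ← ENNReal.ofReal_prod_of_nonneg (fun i _ => (Real.exp_pos _).le), ← Real.exp_sum]
    congr 1
    rw [hlamS]
    simp [neg_mul, Finset.sum_mul]
  have key : ∀ t : ℝ, 0 ≤ t → (μ {ω | ENNReal.ofReal t < TS ω}).toReal
      = ∑ B : Finset (Fin n), m B * Real.exp (-(lamS B) * t) := by
    intro t ht
    have hpt : ∀ ω, Set.indicator {ω | ENNReal.ofReal t < TS ω} (fun _ => (1:ℝ)) ω
        = ∑ B : Finset (Fin n),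
            m B * Set.indicator (⋂ i ∈ B, {ω | ENNReal.ofReal t < T i ω}) (fun _ => (1:ℝ)) ω := by
      intro ω
      have hmem : ∀ B : Finset (Fin n),
          (ω ∈ ⋂ i ∈ B, {ω | ENNReal.ofReal t < T i ω}) ↔ B ⊆ Uset t ω := by
        intro B
        simp only [Set.mem_iInter, Set.mem_setOf_eq]
        constructor
        · intro h i hi; exact Finset.mem_filter.mpr ⟨Finset.mem_univ i, h i hi⟩
        · intro h i hi; exact (Finset.mem_filter.mp (h hi)).2
      have hrhs : (∑ B : Finset (Fin n),
          m B * Set.indicator (⋂ i ∈ B, {ω | ENNReal.ofReal t < T i ω}) (fun _ => (1:ℝ)) ω)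
          = (v (Uset t ω) : ℝ) := by
        have h2 : ∀ B : Finset (Fin n),
            m B * Set.indicator (⋂ i ∈ B, {ω | ENNReal.ofReal t < T i ω}) (fun _ => (1:ℝ)) ω
            = if B ⊆ Uset t ω then m B else 0 := by
          intro B
          by_cases h : B ⊆ Uset t ω
          · rw [Set.indicator_of_mem ((hmem B).mpr h)]; simp [h]
          · rw [Set.indicator_of_notMem (fun hc => h ((hmem B).mp hc))]; simp [h]
        rw [Finset.sum_congr rfl (fun B _ => h2 B), ← Finset.sum_filter]
        have hfil : Finset.univ.filter (fun B => B ⊆ Uset t ω) = (Uset t ω).powerset := by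
          ext B; simp [Finset.mem_powerset]
        rw [hfil]
        exact moebius_inv (fun C => (v C : ℝ)) (Uset t ω)
      rw [hrhs, hevent t]
      by_cases h : v (Uset t ω) = 1
      · rw [Set.indicator_of_mem (show ω ∈ {ω | v (Uset t ω) = 1} from h), h]; norm_num
      · have h0 : v (Uset t ω) = 0 := (hv01 _).resolve_right h
        rw [Set.indicator_of_notMem (show ω ∉ {ω | v (Uset t ω) = 1} from h), h0]; norm_num
    have hVmeas : MeasurableSet {ω | ENNReal.ofReal t < TS ω} := hTSmeas measurableSet_Ioi
    calc (μ {ω | ENNReal.ofReal t < TS ω}).toReal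
        = ∫ ω, Set.indicator {ω | ENNReal.ofReal t < TS ω} (fun _ => (1:ℝ)) ω ∂μ := by
          rw [MeasureTheory.integral_indicator_const (1:ℝ) hVmeas]; simp [Measure.real_def]
      _ = ∫ ω, ∑ B : Finset (Fin n),
            m B * Set.indicator (⋂ i ∈ B, {ω | ENNReal.ofReal t < T i ω}) (fun _ => (1:ℝ)) ω ∂μ :=
          MeasureTheory.integral_congr_ae (Filter.Eventually.of_forall hpt)
      _ = ∑ B : Finset (Fin n), ∫ ω,
            m B * Set.indicator (⋂ i ∈ B, {ω | ENNReal.ofReal t < T i ω}) (fun _ => (1:ℝ)) ω ∂μ := by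
          apply MeasureTheory.integral_finset_sum
          intro B _
          apply MeasureTheory.Integrable.const_mul
          rw [MeasureTheory.integrable_indicator_iff (hEmeas t B)]
          exact MeasureTheory.integrableOn_const (measure_ne_top μ _)
      _ = ∑ B : Finset (Fin n), m B * Real.exp (-(lamS B) * t) := by
          apply Finset.sum_congr rfl
          intro B _
          rw [MeasureTheory.integral_const_mul,
            MeasureTheory.integral_indicator_const (1:ℝ) (hEmeas t B), Measure.real_def, hEB t ht B]
          simp [ENNReal.toReal_ofReal (Real.exp_pos _).le]
  -- layer cake
  have hae : TS =ᵐ[μ] fun ω => ENNReal.ofReal ((TS ω).toReal) := by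
    have h := MeasureTheory.measure_eq_zero_iff_ae_notMem.mp hTStop
    filter_upwards [h] with ω hω
    exact (ENNReal.ofReal_toReal hω).symm
  have hlc : ∫⁻ ω, TS ω ∂μ = ∫⁻ s in Set.Ioi (0:ℝ), μ {a | s < (TS a).toReal} := by
    rw [MeasureTheory.lintegral_congr_ae hae]
    exact MeasureTheory.lintegral_eq_lintegral_meas_lt μ
      (Filter.Eventually.of_forall fun ω => ENNReal.toReal_nonneg)
      hTSmeas.ennreal_toReal.aemeasurable
  have hsets : ∀ s : ℝ, 0 < s →
      μ {a | s < (TS a).toReal} = μ {a | ENNReal.ofReal s < TS a} := by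
    intro s hs
    apply MeasureTheory.measure_congr
    have h := MeasureTheory.measure_eq_zero_iff_ae_notMem.mp hTStop
    filter_upwards [h] with ω hω
    have hne : TS ω ≠ ⊤ := hω
    simp only [eq_iff_iff, Set.mem_setOf_eq]
    exact ((ENNReal.ofReal_lt_iff_lt_toReal hs.le hne)).symm
  set F : ℝ → ℝ := fun s => ∑ B ∈ (Finset.univ : Finset (Finset (Fin n))).erase ∅,
      m B * Real.exp (-(lamS B) * s) with hF
  have hFkey : ∀ s : ℝ, 0 ≤ s →
      (μ {a | ENNReal.ofReal s < TS a}).toReal = F s := by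
    intro s hs
    rw [key s hs, hF]
    rw [← Finset.sum_erase_add _ _ (Finset.mem_univ (∅ : Finset (Fin n))), hm0]
    ring
  have hFint : MeasureTheory.IntegrableOn F (Set.Ioi (0:ℝ)) := by
    apply MeasureTheory.integrable_finset_sum
    intro B hB
    have hBne : B ≠ ∅ := Finset.ne_of_mem_erase hB
    exact ((exp_neg_integrableOn_Ioi 0 (hlampos B hBne)).const_mul (m B))
  have hFnonneg : ∀ s ∈ Set.Ioi (0:ℝ), 0 ≤ F s := by
    intro s hs
    rw [← hFkey s (le_of_lt hs)]
    exact ENNReal.toReal_nonneg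
  have hexp : ∀ b : ℝ, 0 < b → ∫ s in Set.Ioi (0:ℝ), Real.exp (-b * s) = b⁻¹ := by
    intro b hb
    have h := integral_comp_mul_left_Ioi (fun x => Real.exp (-x)) 0 hb
    simp only [mul_zero, integral_exp_neg_Ioi_zero, smul_eq_mul, mul_one, neg_mul] at h ⊢
    exact h
  calc (∫⁻ ω, TS ω ∂μ).toReal
      = (∫⁻ s in Set.Ioi (0:ℝ), ENNReal.ofReal (F s)).toReal := by
        rw [hlc]
        congr 1
        apply MeasureTheory.setLIntegral_congr_fun measurableSet_Ioi
        intro s hs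
        dsimp only
        rw [hsets s hs, ← hFkey s hs.le, ENNReal.ofReal_toReal (measure_ne_top μ _)]
    _ = ∫ s in Set.Ioi (0:ℝ), F s := by
        rw [← MeasureTheory.ofReal_integral_eq_lintegral_ofReal hFint
          ((MeasureTheory.ae_restrict_iff' measurableSet_Ioi).mpr
            (Filter.Eventually.of_forall hFnonneg))]
        exact ENNReal.toReal_ofReal (MeasureTheory.integral_nonneg_of_ae
          ((MeasureTheory.ae_restrict_iff' measurableSet_Ioi).mpr
            (Filter.Eventually.of_forall hFnonneg)))
    _ = ∑ B ∈ (Finset.univ : Finset (Finset (Fin n))).erase ∅,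
          m B * (lamS B)⁻¹ := by
        rw [hF, MeasureTheory.integral_finset_sum]
        · apply Finset.sum_congr rfl
          intro B hB
          rw [MeasureTheory.integral_const_mul, hexp (lamS B) (hlampos B (Finset.ne_of_mem_erase hB))]
        · intro B hB
          exact ((exp_neg_integrableOn_Ioi 0 (hlampos B (Finset.ne_of_mem_erase hB))).const_mul (m B))
    _ = ∑ A ∈ (Finset.univ : Finset (Finset (Fin n))).erase ∅,
          (∑ B ∈ A.powerset, (-1 : ℝ) ^ (A.card - B.card) * (v B : ℝ)) / (∑ i ∈ A, lam i) := by
        apply Finset.sum_congr rfl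
        intro A hA
        rw [div_eq_mul_inv]
end
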